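/- Let L ⊆ ℝ^n be a polytope in standard form and let x ∈ L. Then the convex hull of the vertex support of x equals the set of all points of L whose support is contained in the support of x; that is, Conv(Vsupp(x)) = {y ∈ L : supp(y) ⊆ supp(x)}. -/

import Mathlib

/-- The support of a vector: the set of indices with nonzero coordinate. -/
def supp {n : ℕ} (x : Fin n → ℝ) : Set (Fin n) := {i | x i ≠ 0}

/-- A polytope in standard form: a bounded intersection of an affine subspace
(given by linear equations `A x = b`) with the nonnegative orthant. -/
def StdForm {n : ℕ} (L : Set (Fin n → ℝ)) : Prop :=
  Bornology.IsBounded L ∧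
    ∃ (k : ℕ) (A : Matrix (Fin k) (Fin n) ℝ) (b : Fin k → ℝ),
      L = {x | A.mulVec x = b ∧ ∀ i, 0 ≤ x i}

/-- The vertex support of `x` in `L`: the set of extreme points (vertices) of `L`
whose support is contained in the support of `x`. -/
def Vsupp {n : ℕ} (L : Set (Fin n → ℝ)) (x : Fin n → ℝ) : Set (Fin n → ℝ) :=
  {y ∈ Set.extremePoints ℝ L | supp y ⊆ supp x}

lemma supp_subset_iff {n : ℕ} {y x : Fin n → ℝ} :
    supp y ⊆ supp x ↔ ∀ i, x i = 0 → y i = 0 := by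
  constructor
  · intro h i hxi
    by_contra hyi
    exact (h hyi) hxi
  · intro h i hi
    exact fun hxi => hi (h i hxi)

/-- An extreme point of a standard-form polytope is the unique point of the polytope
whose support is contained in its own support. -/
lemma ext_unique {n k : ℕ} (A : Matrix (Fin k) (Fin n) ℝ) (b : Fin k → ℝ)
    {x y : Fin n → ℝ}
    (hx : x ∈ Set.extremePoints ℝ {z : Fin n → ℝ | A.mulVec z = b ∧ ∀ i, 0 ≤ z i})
    (hy : y ∈ {z : Fin n → ℝ | A.mulVec z = b ∧ ∀ i, 0 ≤ z i})
    (hs : supp y ⊆ supp x) : y = x := by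
  by_contra hne
  have hxL := hx.1
  set d : Fin n → ℝ := x - y with hd
  have hxpos : ∀ i, x i ≠ 0 → 0 < x i := fun i hi => (hxL.2 i).lt_of_ne (Ne.symm hi)
  have hd0 : ∀ i, x i = 0 → d i = 0 := by
    intro i hxi
    have hyi : y i = 0 := supp_subset_iff.1 hs i hxi
    simp [hd, hxi, hyi]
  -- choose a small ε
  obtain ⟨ε, hε0, hεlt⟩ : ∃ ε > 0, ∀ i, x i ≠ 0 → ε * |d i| < x i := by
    by_cases hS : (Finset.univ.filter (fun i => x i ≠ 0)).Nonempty
    · refine ⟨(Finset.univ.filter (fun i => x i ≠ 0)).inf' hS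
        (fun i => x i / (|d i| + 1)), ?_, ?_⟩
      · refine (Finset.lt_inf'_iff hS).2 fun i hi => ?_
        have := hxpos i (Finset.mem_filter.1 hi).2
        positivity
      · intro i hi
        have h1 : (Finset.univ.filter (fun i => x i ≠ 0)).inf' hS
            (fun i => x i / (|d i| + 1)) ≤ x i / (|d i| + 1) :=
          Finset.inf'_le _ (Finset.mem_filter.2 ⟨Finset.mem_univ i, hi⟩)
        have hpos : (0:ℝ) < |d i| + 1 := by positivity
        have hxi := hxpos i hi
        calc _ ≤ x i / (|d i| + 1) * |d i| :=
              mul_le_mul_of_nonneg_right h1 (abs_nonneg _)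
          _ < x i := by
              rw [div_mul_eq_mul_div, div_lt_iff₀ hpos]
              exact mul_lt_mul_of_pos_left (lt_add_one _) hxi
    · exact ⟨1, one_pos, fun i hi => absurd (Finset.mem_filter.2
        ⟨Finset.mem_univ i, hi⟩) (fun h => hS ⟨i, h⟩)⟩
  have hAd : A.mulVec d = 0 := by
    rw [hd, Matrix.mulVec_sub, hxL.1, hy.1, sub_self]
  have hmem : ∀ s : ℝ, |s| ≤ ε → x + s • d ∈
      {z : Fin n → ℝ | A.mulVec z = b ∧ ∀ i, 0 ≤ z i} := by
    intro s hs'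
    constructor
    · rw [Matrix.mulVec_add, Matrix.mulVec_smul, hAd, smul_zero, add_zero, hxL.1]
    · intro i
      by_cases hxi : x i = 0
      · simp [hxi, hd0 i hxi]
      · have h1 : |s * d i| < x i := by
          rw [abs_mul]
          calc |s| * |d i| ≤ ε * |d i| :=
                mul_le_mul_of_nonneg_right hs' (abs_nonneg _)
            _ < x i := hεlt i hxi
        have := neg_lt_of_abs_lt h1
        have : -(x i) < s * d i := this
        simp only [Pi.add_apply, Pi.smul_apply, smul_eq_mul]
        linarith
  have h1 : x + ε • d ∈ _ := hmem ε (by rw [abs_of_pos hε0])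
  have h2 : x + (-ε) • d ∈ _ := hmem (-ε) (by rw [abs_neg, abs_of_pos hε0])
  have hseg : x ∈ openSegment ℝ (x + ε • d) (x + (-ε) • d) := by
    refine ⟨1/2, 1/2, by norm_num, by norm_num, by norm_num, ?_⟩
    funext i
    simp only [Pi.add_apply, Pi.smul_apply, smul_eq_mul, Pi.neg_apply]
    ring
  have := hx.2 h1 h2 hseg
  have hεd : ε • d = 0 := by
    have := congrArg (· - x) this
    simpa [add_sub_cancel_left] using this
  have hdz : d = 0 := by
    have := smul_eq_zero.1 hεd
    rcases this with h | h
    · exact absurd h (ne_of_gt hε0)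
    · exact h
  exact hne (sub_eq_zero.1 hdz).symm

theorem stmt_0 {n : ℕ} (L : Set (Fin n → ℝ)) (hL : StdForm L)
    (x : Fin n → ℝ) (hx : x ∈ L) :
    convexHull ℝ (Vsupp L x) = {y ∈ L | supp y ⊆ supp x} := by
  obtain ⟨hbdd, k, A, b, rfl⟩ := hL
  set L : Set (Fin n → ℝ) := {z | A.mulVec z = b ∧ ∀ i, 0 ≤ z i} with hLdef
  set M : Set (Fin n → ℝ) := {y ∈ L | supp y ⊆ supp x} with hMdef
  -- M is convex
  have hMconv : Convex ℝ M := by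
    intro u hu v hv ta tb hta htb htab
    refine ⟨⟨?_, ?_⟩, ?_⟩
    · rw [Matrix.mulVec_add, Matrix.mulVec_smul, Matrix.mulVec_smul,
        hu.1.1, hv.1.1, ← add_smul, htab, one_smul]
    · intro i
      have := hu.1.2 i
      have := hv.1.2 i
      simp only [Pi.add_apply, Pi.smul_apply, smul_eq_mul]
      nlinarith
    · rw [supp_subset_iff]
      intro i hxi
      have h1 := supp_subset_iff.1 hu.2 i hxi
      have h2 := supp_subset_iff.1 hv.2 i hxi
      simp [h1, h2]
  -- M is closed
  have hMclosed : IsClosed M := by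
    have h1 : IsClosed {z : Fin n → ℝ | A.mulVec z = b} := by
      apply isClosed_eq _ continuous_const
      exact (Matrix.mulVecLin A).continuous_of_finiteDimensional
    have h2 : IsClosed {z : Fin n → ℝ | ∀ i, 0 ≤ z i} := by
      have : {z : Fin n → ℝ | ∀ i, 0 ≤ z i} = ⋂ i, {z | 0 ≤ z i} := by
        ext z; simp
      rw [this]
      exact isClosed_iInter fun i => isClosed_le continuous_const (continuous_apply i)
    have h3 : IsClosed {z : Fin n → ℝ | ∀ i, x i = 0 → z i = 0} := by
      have : {z : Fin n → ℝ | ∀ i, x i = 0 → z i = 0}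
          = ⋂ i ∈ {i | x i = 0}, {z : Fin n → ℝ | z i = 0} := by
        ext z; simp
      rw [this]
      exact isClosed_biInter fun i _ => isClosed_eq (continuous_apply i) continuous_const
    have : M = ({z : Fin n → ℝ | A.mulVec z = b} ∩ {z | ∀ i, 0 ≤ z i})
        ∩ {z | ∀ i, x i = 0 → z i = 0} := by
      ext z
      simp only [hMdef, hLdef, Set.mem_setOf_eq, Set.mem_inter_iff, supp_subset_iff]
      try tauto
    rw [this]
    exact ((h1.inter h2).inter h3)
  -- M is compact
  have hMcomp : IsCompact M := by
    apply Metric.isCompact_of_isClosed_isBounded hMclosed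
    exact hbdd.subset (fun z hz => hz.1)
  -- extreme points of M are extreme points of L
  have hMext : Set.extremePoints ℝ M ⊆ Set.extremePoints ℝ L := by
    rintro y ⟨hyM, hyext⟩
    refine ⟨hyM.1, ?_⟩
    intro a ha c hc hseg
    have key : ∀ w : Fin n → ℝ, w ∈ L → (∀ i, y i = 0 → w i = 0) → w ∈ M := by
      intro w hw hsupp
      exact ⟨hw, (supp_subset_iff.2 hsupp).trans hyM.2⟩
    obtain ⟨t, u, ht, hu, htu, heq⟩ := hseg
    have hzero : ∀ i, y i = 0 → a i = 0 ∧ c i = 0 := by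
      intro i hyi
      have hi : t * a i + u * c i = 0 := by
        have := congrFun heq i
        simpa [hyi] using this
      have h1 : 0 ≤ t * a i := mul_nonneg ht.le (ha.2 i)
      have h2 : 0 ≤ u * c i := mul_nonneg hu.le (hc.2 i)
      have ha0 : t * a i = 0 := by linarith
      have hc0 : u * c i = 0 := by linarith
      constructor
      · rcases mul_eq_zero.1 ha0 with h | h
        · exact absurd h (ne_of_gt ht)
        · exact h
      · rcases mul_eq_zero.1 hc0 with h | h
        · exact absurd h (ne_of_gt hu)
        · exact h
    have haM : a ∈ M := key a ha fun i hi => (hzero i hi).1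
    have hcM : c ∈ M := key c hc fun i hi => (hzero i hi).2
    exact hyext haM hcM ⟨t, u, ht, hu, htu, heq⟩
  -- extreme points of L are finite
  have hfin : (Set.extremePoints ℝ L).Finite := by
    apply Set.Finite.of_finite_image (f := supp) (Set.toFinite _)
    intro u hu v hv huv
    have h1 : u = v := by
      apply ext_unique A b hv hu.1
      rw [huv]
    exact h1
  have hVfin : (Vsupp L x).Finite := hfin.subset fun y hy => hy.1
  -- extreme points of M land in Vsupp
  have hsub : Set.extremePoints ℝ M ⊆ Vsupp L x := by
    intro y hy
    exact ⟨hMext hy, hy.1.2⟩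
  have hVsub : Vsupp L x ⊆ M := fun y hy => ⟨hy.1.1, hy.2⟩
  apply Set.Subset.antisymm
  · exact convexHull_min hVsub hMconv
  · calc M = closure (convexHull ℝ (Set.extremePoints ℝ M)) :=
        (closure_convexHull_extremePoints hMcomp hMconv).symm
      _ ⊆ closure (convexHull ℝ (Vsupp L x)) :=
        closure_mono (convexHull_mono hsub)
      _ = convexHull ℝ (Vsupp L x) := (hVfin.isClosed_convexHull ℝ).closure_eq
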